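/- Let W ∈ ℝ^{n×n} be a mixing matrix with mixing rate α ∈ [0,1), let η ∈ ℝ, let u, v ∈ ℝ^{nd} with block averages ū, v̄, and set u' = (W ⊗ I_d)(u − η·v) with block average ū'. Then ‖u' − 1_n ⊗ ū'‖₂² ≤ (2α²/(1+α²))·‖u − 1_n ⊗ ū‖₂² + (2α²η²/(1−α²))·‖v − 1_n ⊗ v̄‖₂². -/

import Mathlib

open Finset

noncomputable section

/-- `ℝ^d` as a Euclidean space. -/
abbrev Vec (d : ℕ) := EuclideanSpace ℝ (Fin d)

/-- `ℝ^{nd}` as a stack of `n` blocks in `ℝ^d`, with the Euclidean (ℓ₂) norm. -/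
abbrev Stacked (n d : ℕ) := PiLp 2 (fun _ : Fin n => Vec d)

/-- Block average `x̄ = (1/n) Σᵢ xᵢ` of a stacked vector. -/
def blockAvg {n d : ℕ} (x : Stacked n d) : Vec d := (n : ℝ)⁻¹ • ∑ i, x i

/-- The stacked vector `1ₙ ⊗ y` whose every block equals `y`. -/
def stack (n : ℕ) {d : ℕ} (y : Vec d) : Stacked n d := WithLp.toLp 2 (fun _ => y)

/-- Action of `W ⊗ I_d` on a stacked vector. -/
def kronApply {n d : ℕ} (W : Matrix (Fin n) (Fin n) ℝ) (x : Stacked n d) : Stacked n d :=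
  WithLp.toLp 2 (fun i => ∑ j, W i j • x j)

/-- A mixing matrix: `W·1ₙ = 1ₙ` and `Wᵀ·1ₙ = 1ₙ`. -/
def IsMixing {n : ℕ} (W : Matrix (Fin n) (Fin n) ℝ) : Prop :=
  W.mulVec (fun _ => 1) = (fun _ => 1) ∧ Matrix.vecMul (fun _ => 1) W = (fun _ => 1)

/-- The mixing rate `α = ‖W − (1/n)1ₙ1ₙᵀ‖_op` (ℓ₂ operator norm). -/
def mixingRate {n : ℕ} (W : Matrix (Fin n) (Fin n) ℝ) : ℝ :=
  ‖LinearMap.toContinuousLinearMap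
    (Matrix.toEuclideanLin (W - (n : ℝ)⁻¹ • Matrix.of fun _ _ => (1 : ℝ)))‖

/-- Squared-norm bound for the Kronecker action of a matrix on stacked vectors. -/
lemma kron_sq_norm_le {n d : ℕ} (M : Matrix (Fin n) (Fin n) ℝ) (α : ℝ)
    (hle : ∀ y : EuclideanSpace ℝ (Fin n), ‖Matrix.toEuclideanLin M y‖ ≤ α * ‖y‖)
    (z : Stacked n d) : ‖kronApply M z‖ ^ 2 ≤ α ^ 2 * ‖z‖ ^ 2 := by
  have hnorm : ∀ (m : ℕ) (x : EuclideanSpace ℝ (Fin m)), ‖x‖^2 = ∑ k, (x k)^2 := by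
    intro m x
    rw [PiLp.norm_sq_eq_of_L2]
    simp [sq_abs]
  have hz : ‖z‖^2 = ∑ j, ‖z j‖^2 := PiLp.norm_sq_eq_of_L2 _ z
  have hk : ‖kronApply M z‖^2 = ∑ i, ‖kronApply M z i‖^2 := PiLp.norm_sq_eq_of_L2 _ _
  have key : ∀ k : Fin d, ∑ i, (∑ j, M i j * z j k)^2 ≤ α^2 * ∑ j, (z j k)^2 := by
    intro k
    have h := hle ((WithLp.equiv 2 _).symm (fun j => z j k))
    have h2 := pow_le_pow_left₀ (norm_nonneg _) h 2
    rw [mul_pow, hnorm, hnorm] at h2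
    simpa [Matrix.toEuclideanLin_apply, Matrix.mulVec, dotProduct,
      WithLp.equiv_symm_apply] using h2
  calc ‖kronApply M z‖^2 = ∑ k : Fin d, ∑ i, (∑ j, M i j * z j k)^2 := by
        rw [hk, Finset.sum_comm]
        refine Finset.sum_congr rfl fun i _ => ?_
        rw [hnorm]
        refine Finset.sum_congr rfl fun k _ => ?_
        congr 1
        simp only [kronApply]
        rw [WithLp.ofLp_sum, Finset.sum_apply]
        simp
    _ ≤ ∑ k : Fin d, α^2 * ∑ j, (z j k)^2 := Finset.sum_le_sum fun k _ => key k
    _ = α^2 * ‖z‖^2 := by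
        rw [← mul_sum, hz, Finset.sum_comm]
        congr 1
        exact Finset.sum_congr rfl fun j _ => (hnorm _ (z j)).symm

/-- Centering commutes with the mixing matrix action. -/
lemma center_kron {n d : ℕ} (W : Matrix (Fin n) (Fin n) ℝ) (hW : IsMixing W) (x : Stacked n d) :
    kronApply W x - stack n (blockAvg (kronApply W x)) =
    kronApply (W - (n:ℝ)⁻¹ • Matrix.of fun _ _ => (1:ℝ)) (x - stack n (blockAvg x)) := by
  have hrow : ∀ i, ∑ j, W i j = 1 := by
    intro i; have := congrFun hW.1 i
    simpa [Matrix.mulVec, dotProduct] using this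
  have hcol : ∀ j, ∑ i, W i j = 1 := by
    intro j; have := congrFun hW.2 j
    simpa [Matrix.vecMul, dotProduct] using this
  have havg : blockAvg (kronApply W x) = blockAvg x := by
    unfold blockAvg kronApply
    congr 1
    rw [Finset.sum_comm]
    calc ∑ j, ∑ i, W i j • x j = ∑ j, (∑ i, W i j) • x j := by
           exact sum_congr rfl fun j _ => (Finset.sum_smul).symm
      _ = ∑ j, x j := by simp [hcol]
  refine PiLp.ext fun i => ?_
  have hn : (n:ℝ) ≠ 0 := by
    have := i.pos
    positivity
  set A := blockAvg x with hA
  have hsub : ∀ j, (x - stack n A) j = x j - A := fun j => rfl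
  show kronApply W x i - stack n (blockAvg (kronApply W x)) i = _
  rw [havg]
  show (∑ j, W i j • x j) - A = ∑ j, (W i j - (n:ℝ)⁻¹ * 1) • (x - stack n A) j
  have e1 : ∀ j, (W i j - (n:ℝ)⁻¹*1) • ((x - stack n A) j) =
      W i j • x j - W i j • A - ((n:ℝ)⁻¹ • x j - (n:ℝ)⁻¹ • A) := by
    intro j
    rw [hsub]
    simp [sub_smul, smul_sub]
    abel
  rw [Finset.sum_congr rfl (fun j _ => e1 j), Finset.sum_sub_distrib, Finset.sum_sub_distrib,
    Finset.sum_sub_distrib, ← Finset.sum_smul, hrow, one_smul, ← Finset.smul_sum,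
    ← Finset.smul_sum, Finset.sum_const, Finset.card_univ]
  have h2 : (n:ℝ)⁻¹ • (∑ j, x j) = A := rfl
  rw [h2, Fintype.card_fin, ← Nat.cast_smul_eq_nsmul ℝ n A, smul_smul, inv_mul_cancel₀ hn,
    one_smul]
  abel

set_option maxHeartbeats 1000000 in
theorem consensus_error_step {n d : ℕ} (W : Matrix (Fin n) (Fin n) ℝ) (α : ℝ)
    (hW : IsMixing W) (hα : α = mixingRate W) (hα1 : α ∈ Set.Ico (0 : ℝ) 1)
    (η : ℝ) (u v : Stacked n d) (u' : Stacked n d) (hu' : u' = kronApply W (u - η • v)) :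
    ‖u' - stack n (blockAvg u')‖ ^ 2 ≤
      (2 * α ^ 2 / (1 + α ^ 2)) * ‖u - stack n (blockAvg u)‖ ^ 2
      + (2 * α ^ 2 * η ^ 2 / (1 - α ^ 2)) * ‖v - stack n (blockAvg v)‖ ^ 2 := by
  obtain ⟨hα0, hαlt⟩ := hα1
  set M := W - (n:ℝ)⁻¹ • Matrix.of fun _ _ => (1:ℝ) with hM
  have hle : ∀ y : EuclideanSpace ℝ (Fin n), ‖Matrix.toEuclideanLin M y‖ ≤ α * ‖y‖ := by
    intro y
    have h := (LinearMap.toContinuousLinearMap (Matrix.toEuclideanLin M)).le_opNorm y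
    rw [LinearMap.coe_toContinuousLinearMap'] at h
    rw [hα]
    exact h
  set a := u - stack n (blockAvg u) with ha
  set b := v - stack n (blockAvg v) with hb
  have hlin : blockAvg (u - η • v) = blockAvg u - η • blockAvg v := by
    unfold blockAvg
    rw [show (∑ i, (u - η • v) i) = ∑ i, (u i - η • v i) from rfl]
    rw [Finset.sum_sub_distrib, smul_sub]
    congr 1
    rw [← Finset.smul_sum, smul_comm]
  have hdecomp : u' - stack n (blockAvg u') = kronApply M (a - η • b) := by
    have harg : (u - η • v) - stack n (blockAvg (u - η • v)) = a - η • b := by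
      refine PiLp.ext fun i => ?_
      show (u i - η • v i) - blockAvg (u - η • v) = (u i - blockAvg u) - η • (v i - blockAvg v)
      rw [hlin, smul_sub]
      abel
    rw [hu', center_kron W hW, harg]
  have hkey : ‖u' - stack n (blockAvg u')‖^2 ≤ α^2 * ‖a - η • b‖^2 := by
    rw [hdecomp]; exact kron_sq_norm_le M α hle _
  have htri : ‖a - η • b‖ ≤ ‖a‖ + |η| * ‖b‖ := by
    calc ‖a - η • b‖ ≤ ‖a‖ + ‖η • b‖ := norm_sub_le _ _
      _ = ‖a‖ + |η| * ‖b‖ := by rw [norm_smul, Real.norm_eq_abs]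
  have h2 : ‖a - η • b‖^2 ≤ (‖a‖ + |η| * ‖b‖)^2 := pow_le_pow_left₀ (norm_nonneg _) htri 2
  have hL : ‖u' - stack n (blockAvg u')‖^2 ≤ α^2 * (‖a‖ + |η| * ‖b‖)^2 :=
    le_trans hkey (mul_le_mul_of_nonneg_left h2 (sq_nonneg α))
  set p := ‖a‖ with hp'
  set q := ‖b‖ with hq'
  have hp : 0 ≤ p := norm_nonneg _
  have hq : 0 ≤ q := norm_nonneg _
  have hd1 : (0:ℝ) < 1 + α^2 := by positivity
  have hd2 : (0:ℝ) < 1 - α^2 := by nlinarith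
  refine le_trans hL ?_
  rw [← sq_abs η, div_mul_eq_mul_div, div_mul_eq_mul_div, div_add_div _ _ hd1.ne' hd2.ne',
    le_div_iff₀ (by positivity)]
  nlinarith [mul_nonneg (sq_nonneg α) (sq_nonneg ((1-α^2)*p - (1+α^2)*(|η| * q)))]
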